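/- Let B > 0, Bb₀ > 0, Bb₁ > 0 with b₀ + b₁ = 1. The functions f₁(t) = e^{-t}(1 + b₁(e^{-2Bt} - 1)/(1 + 2Bb₀)), f₂(t) = e^{-t}(1 + b₀(e^{-2Bt} - 1)/(1 + 2Bb₁)), f₃(t) = e^{-t}(1 - (e^{-2Bt} - 1)/(2B)) solve the linear ODE system f₁' = (4B²b₁b₀/(1+2Bb₀))f₃ - (1+2Bb₁)f₁, f₂' = (4B²b₁b₀/(1+2Bb₁))f₃ - (1+2Bb₀)f₂, f₃' = ((1+2Bb₀)/2)f₁ + ((1+2Bb₁)/2)f₂ - (1+B)f₃, with f₁(0) = f₂(0) = f₃(0) = 1. -/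

import Mathlib

open Real

/-- The explicit conditional tail functions of the neutral two-type model solve the
linear ODE system of the backward process, with initial values `1`. -/
theorem neutral_ODE_system (B b₀ b₁ : ℝ) (hB : 0 < B) (hb₀ : 0 < b₀) (hb₁ : 0 < b₁)
    (hsum : b₀ + b₁ = 1) (f₁ f₂ f₃ : ℝ → ℝ)
    (hf₁ : ∀ t, f₁ t =
      Real.exp (-t) * (1 + b₁ * (Real.exp (-2 * B * t) - 1) / (1 + 2 * B * b₀)))
    (hf₂ : ∀ t, f₂ t =
      Real.exp (-t) * (1 + b₀ * (Real.exp (-2 * B * t) - 1) / (1 + 2 * B * b₁)))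
    (hf₃ : ∀ t, f₃ t =
      Real.exp (-t) * (1 - (Real.exp (-2 * B * t) - 1) / (2 * B))) :
    f₁ 0 = 1 ∧ f₂ 0 = 1 ∧ f₃ 0 = 1 ∧
      (∀ t, HasDerivAt f₁
        (4 * B ^ 2 * b₁ * b₀ / (1 + 2 * B * b₀) * f₃ t - (1 + 2 * B * b₁) * f₁ t) t) ∧
      (∀ t, HasDerivAt f₂
        (4 * B ^ 2 * b₁ * b₀ / (1 + 2 * B * b₁) * f₃ t - (1 + 2 * B * b₀) * f₂ t) t) ∧
      (∀ t, HasDerivAt f₃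
        ((1 + 2 * B * b₀) / 2 * f₁ t + (1 + 2 * B * b₁) / 2 * f₂ t - (1 + B) * f₃ t) t) := by
  have hb : b₁ = 1 - b₀ := by linarith
  subst hb
  have hD₀ : (1 : ℝ) + 2 * B * b₀ ≠ 0 := by positivity
  have hD₁ : (1 : ℝ) + 2 * B * (1 - b₀) ≠ 0 := by nlinarith
  have hBne : B ≠ 0 := ne_of_gt hB
  have hexp : ∀ t : ℝ, HasDerivAt (fun t : ℝ => Real.exp (-t)) (-Real.exp (-t)) t := by
    intro t
    simpa using ((hasDerivAt_id t).neg).exp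
  have hexp2 : ∀ t : ℝ, HasDerivAt (fun t : ℝ => Real.exp (-2 * B * t))
      (-2 * B * Real.exp (-2 * B * t)) t := by
    intro t
    simpa [mul_comm] using ((hasDerivAt_id t).const_mul (-2 * B)).exp
  refine ⟨by simp [hf₁ 0], by simp [hf₂ 0], by simp [hf₃ 0], ?_, ?_, ?_⟩
  · intro t
    have H := (hexp t).mul
      ((((((hexp2 t).sub_const 1).const_mul (1 - b₀)).div_const (1 + 2 * B * b₀))).const_add 1)
    have H' := H.congr_of_eventuallyEq (Filter.Eventually.of_forall fun x => hf₁ x)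
    convert H' using 1
    · rfl
    · rfl
    rw [hf₃ t, hf₁ t]
    field_simp
    ring
  · intro t
    have H := (hexp t).mul
      ((((((hexp2 t).sub_const 1).const_mul b₀).div_const (1 + 2 * B * (1 - b₀)))).const_add 1)
    have H' := H.congr_of_eventuallyEq (Filter.Eventually.of_forall fun x => hf₂ x)
    convert H' using 1
    · rfl
    · rfl
    rw [hf₃ t, hf₂ t]
    field_simp
    ring
  · intro t
    have H := (hexp t).mul
      ((((hexp2 t).sub_const 1).div_const (2 * B)).const_sub 1)
    have H' := H.congr_of_eventuallyEq (Filter.Eventually.of_forall fun x => hf₃ x)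
    convert H' using 1
    · rfl
    · rfl
    rw [hf₁ t, hf₂ t, hf₃ t]
    field_simp
    ring
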